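/- Let X be a smooth vertical vector field on M and let Y_H and Z_H be the horizontal lifts of smooth vector fields Y and Z on B. Then 2·⟪∇^M_X Y_H, Z_H⟫ = −⟪[Y_H, Z_H], X⟫ as functions on M. -/

import Mathlib

open Manifold

noncomputable section

/-- A vector field on a manifold is smooth if the corresponding section of the
tangent bundle is smooth. -/
def IsSmoothVF {E : Type*} [NormedAddCommGroup E] [NormedSpace ℝ E]
    {H : Type*} [TopologicalSpace H] (I : ModelWithCorners ℝ E H)
    {M : Type*} [TopologicalSpace M] [ChartedSpace H M] [IsManifold I (⊤ : ℕ∞) M]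
    (X : ∀ m : M, TangentSpace I m) : Prop :=
  ContMDiff I I.tangent (⊤ : ℕ∞) (fun m => (⟨m, X m⟩ : TangentBundle I M))

/-- The action of a vector field on a function: `X(f)(m) := df_m(X_m)`. -/
def vfApply {E : Type*} [NormedAddCommGroup E] [NormedSpace ℝ E]
    {H : Type*} [TopologicalSpace H] (I : ModelWithCorners ℝ E H)
    {M : Type*} [TopologicalSpace M] [ChartedSpace H M]
    (X : ∀ m : M, TangentSpace I m) (f : M → ℝ) : M → ℝ :=
  fun m => mfderiv I 𝓘(ℝ, ℝ) f m (X m)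

/-- A Riemannian metric: a smoothly varying family of real inner products on the
tangent spaces. -/
structure RiemannianMetric {E : Type*} [NormedAddCommGroup E] [NormedSpace ℝ E]
    {H : Type*} [TopologicalSpace H] (I : ModelWithCorners ℝ E H)
    (M : Type*) [TopologicalSpace M] [ChartedSpace H M] [IsManifold I (⊤ : ℕ∞) M] where
  g : ∀ m : M, TangentSpace I m → TangentSpace I m → ℝ
  symm : ∀ m u v, g m u v = g m v u
  add_left : ∀ m u v w, g m (u + v) w = g m u w + g m v w
  smul_left : ∀ (m) (c : ℝ) (u w), g m (c • u) w = c * g m u w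
  posdef : ∀ m v, v ≠ 0 → 0 < g m v v
  smooth : ∀ X Y : ∀ m : M, TangentSpace I m, IsSmoothVF I X → IsSmoothVF I Y →
    ContMDiff I 𝓘(ℝ, ℝ) (⊤ : ℕ∞) (fun m => g m (X m) (Y m))

/-- The Lie bracket of smooth vector fields, characterized by
`[X,Y](f) = X(Y(f)) - Y(X(f))` on smooth functions. -/
structure LieBracketData {E : Type*} [NormedAddCommGroup E] [NormedSpace ℝ E]
    {H : Type*} [TopologicalSpace H] (I : ModelWithCorners ℝ E H)
    (M : Type*) [TopologicalSpace M] [ChartedSpace H M] [IsManifold I (⊤ : ℕ∞) M] where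
  bracket : (∀ m : M, TangentSpace I m) → (∀ m : M, TangentSpace I m) →
    (∀ m : M, TangentSpace I m)
  smooth : ∀ X Y, IsSmoothVF I X → IsSmoothVF I Y → IsSmoothVF I (bracket X Y)
  apply_eq : ∀ X Y, IsSmoothVF I X → IsSmoothVF I Y →
    ∀ f : M → ℝ, ContMDiff I 𝓘(ℝ, ℝ) (⊤ : ℕ∞) f → ∀ m,
      vfApply I (bracket X Y) f m =
        vfApply I X (vfApply I Y f) m - vfApply I Y (vfApply I X f) m

/-- The Levi-Civita connection associated to a Riemannian metric: an ℝ-bilinear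
operator on smooth vector fields, `C^∞`-linear in the first slot, satisfying the
Leibniz rule, metric, and torsion-free. -/
structure LeviCivita {E : Type*} [NormedAddCommGroup E] [NormedSpace ℝ E]
    {H : Type*} [TopologicalSpace H] {I : ModelWithCorners ℝ E H}
    {M : Type*} [TopologicalSpace M] [ChartedSpace H M] [IsManifold I (⊤ : ℕ∞) M]
    (gM : RiemannianMetric I M) (lie : LieBracketData I M) where
  cov : (∀ m : M, TangentSpace I m) → (∀ m : M, TangentSpace I m) →
    (∀ m : M, TangentSpace I m)
  smooth : ∀ X Y, IsSmoothVF I X → IsSmoothVF I Y → IsSmoothVF I (cov X Y)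
  add_left : ∀ X X' Y, IsSmoothVF I X → IsSmoothVF I X' → IsSmoothVF I Y → ∀ m,
    cov (fun m => X m + X' m) Y m = cov X Y m + cov X' Y m
  add_right : ∀ X Y Y', IsSmoothVF I X → IsSmoothVF I Y → IsSmoothVF I Y' → ∀ m,
    cov X (fun m => Y m + Y' m) m = cov X Y m + cov X Y' m
  smul_left : ∀ (c : ℝ) (X Y), IsSmoothVF I X → IsSmoothVF I Y → ∀ m,
    cov (fun m => c • X m) Y m = c • cov X Y m
  smul_right : ∀ (c : ℝ) (X Y), IsSmoothVF I X → IsSmoothVF I Y → ∀ m,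
    cov X (fun m => c • Y m) m = c • cov X Y m
  cinf_linear : ∀ (f : M → ℝ), ContMDiff I 𝓘(ℝ, ℝ) (⊤ : ℕ∞) f →
    ∀ X Y, IsSmoothVF I X → IsSmoothVF I Y → ∀ m,
      cov (fun m => f m • X m) Y m = f m • cov X Y m
  leibniz : ∀ (f : M → ℝ), ContMDiff I 𝓘(ℝ, ℝ) (⊤ : ℕ∞) f →
    ∀ X Y, IsSmoothVF I X → IsSmoothVF I Y → ∀ m,
      cov X (fun m => f m • Y m) m = vfApply I X f m • Y m + f m • cov X Y m
  metric : ∀ X Y Z, IsSmoothVF I X → IsSmoothVF I Y → IsSmoothVF I Z → ∀ m,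
    vfApply I X (fun m => gM.g m (Y m) (Z m)) m =
      gM.g m (cov X Y m) (Z m) + gM.g m (Y m) (cov X Z m)
  torsion_free : ∀ X Y, IsSmoothVF I X → IsSmoothVF I Y → ∀ m,
    cov X Y m - cov Y X m = lie.bracket X Y m

section Submersion

variable {EM : Type*} [NormedAddCommGroup EM] [NormedSpace ℝ EM]
  {HM : Type*} [TopologicalSpace HM] (IM : ModelWithCorners ℝ EM HM)
  {M : Type*} [TopologicalSpace M] [ChartedSpace HM M]
  {EB : Type*} [NormedAddCommGroup EB] [NormedSpace ℝ EB]
  {HB : Type*} [TopologicalSpace HB] (IB : ModelWithCorners ℝ EB HB)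
  {B : Type*} [TopologicalSpace B] [ChartedSpace HB B]

/-- A vector field on `M` is vertical when `dπ_m(X_m) = 0` for all `m`. -/
def IsVerticalVF (π : M → B) (X : ∀ m : M, TangentSpace IM m) : Prop :=
  ∀ m : M, mfderiv IM IB π m (X m) = 0

section
variable [IsManifold IM (⊤ : ℕ∞) M]

/-- A vector field on `M` is horizontal when it is pointwise `g`-orthogonal to the
kernel of `dπ`. -/
def IsHorizontalVF (π : M → B) (gM : RiemannianMetric IM M)
    (X : ∀ m : M, TangentSpace IM m) : Prop :=
  ∀ (m : M) (u : TangentSpace IM m), mfderiv IM IB π m u = 0 → gM.g m (X m) u = 0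

/-- `π : M → B` is a Riemannian submersion: it is smooth, surjective, each
differential `dπ_m` is surjective and restricts to a linear isometry from
`(ker dπ_m)^⊥` onto `T_{π m} B`. -/
structure IsRiemannianSubmersion [IsManifold IB (⊤ : ℕ∞) B] (π : M → B)
    (gM : RiemannianMetric IM M) (gB : RiemannianMetric IB B) : Prop where
  smooth : ContMDiff IM IB (⊤ : ℕ∞) π
  surj : Function.Surjective π
  dsurj : ∀ m : M, Function.Surjective (mfderiv IM IB π m)
  isometry : ∀ (m : M) (v w : TangentSpace IM m),
    (∀ u : TangentSpace IM m, mfderiv IM IB π m u = 0 → gM.g m v u = 0) →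
    (∀ u : TangentSpace IM m, mfderiv IM IB π m u = 0 → gM.g m w u = 0) →
    gB.g (π m) (mfderiv IM IB π m v) (mfderiv IM IB π m w) = gM.g m v w

/-- `YH` is the horizontal lift of the vector field `Y` on `B`: it is smooth,
horizontal and satisfies `dπ_m((Y_H)_m) = Y_{π m}` for all `m`. -/
def IsHorizontalLift (π : M → B) (gM : RiemannianMetric IM M)
    (Y : ∀ b : B, TangentSpace IB b) (YH : ∀ m : M, TangentSpace IM m) : Prop :=
  IsSmoothVF IM YH ∧ IsHorizontalVF IM IB π gM YH ∧
    ∀ m : M, mfderiv IM IB π m (YH m) = Y (π m)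

end

end Submersion


section Aux
variable {E : Type*} [NormedAddCommGroup E] [NormedSpace ℝ E]
  {H : Type*} [TopologicalSpace H] {I : ModelWithCorners ℝ E H}
  {B : Type*} [TopologicalSpace B] [ChartedSpace H B] [IsManifold I (⊤ : ℕ∞) B]

/-- smoothness of `x ↦ df_x(Y_x)` for smooth `f` and smooth section `Y`. -/
theorem aux_vfApply_smooth (Y : ∀ b : B, TangentSpace I b)
    (hY : ContMDiff I I.tangent (⊤ : ℕ∞) (fun m => (⟨m, Y m⟩ : TangentBundle I B)))
    {f : B → ℝ} (hf : ContMDiff I 𝓘(ℝ, ℝ) (⊤ : ℕ∞) f) :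
    ContMDiff I 𝓘(ℝ, ℝ) (⊤ : ℕ∞) (fun x => mfderiv I 𝓘(ℝ, ℝ) f x (Y x)) := by
  have hT : ContMDiff I.tangent (𝓘(ℝ, ℝ)).tangent (⊤ : ℕ∞) (tangentMap I 𝓘(ℝ, ℝ) f) :=
    hf.contMDiff_tangentMap (by simp)
  have hφ : ContMDiff I ((𝓘(ℝ, ℝ)).prod 𝓘(ℝ, ℝ)) (⊤ : ℕ∞)
      (fun x => tangentMap I 𝓘(ℝ, ℝ) f (⟨x, Y x⟩ : TangentBundle I B)) := hT.comp hY
  intro x₀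
  have h2 := (Bundle.contMDiffAt_totalSpace.1 (hφ x₀)).2
  have key : ∀ x : B,
      (trivializationAt ℝ (TangentSpace 𝓘(ℝ, ℝ))
        (tangentMap I 𝓘(ℝ, ℝ) f (⟨x₀, Y x₀⟩ : TangentBundle I B)).proj
        (tangentMap I 𝓘(ℝ, ℝ) f (⟨x, Y x⟩ : TangentBundle I B))).2 =
      mfderiv I 𝓘(ℝ, ℝ) f x (Y x) := by
    intro x
    rw [TangentBundle.trivializationAt_apply]
    simp only [mfld_simps]
    simp [chartAt_self_eq]
    rfl
  refine h2.congr_of_eventuallyEq (Filter.Eventually.of_forall fun x => (key x).symm)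
end Aux

section Sep
variable {E : Type*} [NormedAddCommGroup E] [NormedSpace ℝ E]
  {H : Type*} [TopologicalSpace H] {I : ModelWithCorners ℝ E H}
  {B : Type*} [TopologicalSpace B] [ChartedSpace H B] [IsManifold I (⊤ : ℕ∞) B]
  [I.Boundaryless] [CompactSpace B] [T2Space B] [FiniteDimensional ℝ E]

/-- A tangent vector annihilated by the differential of every smooth real function is zero. -/
theorem aux_tangent_sep {b : B} {v : TangentSpace I b}
    (h : ∀ f : B → ℝ, ContMDiff I 𝓘(ℝ, ℝ) (⊤ : ℕ∞) f → mfderiv I 𝓘(ℝ, ℝ) f b v = 0) : v = 0 := by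
  obtain ⟨n, e, he, -, hinj⟩ := exists_embedding_euclidean_of_compact (I := I) (M := B)
  have key : mfderiv I (𝓡 n) e b v = 0 := by
    have : ∀ i : Fin n, (show EuclideanSpace ℝ (Fin n) from mfderiv I (𝓡 n) e b v) i = 0 := by
      intro i
      have hf : ContMDiff I 𝓘(ℝ, ℝ) (⊤ : ℕ∞) (fun x => EuclideanSpace.proj (𝕜 := ℝ) i (e x)) :=
        (EuclideanSpace.proj (𝕜 := ℝ) i).contMDiff.comp he
      have hcomp : mfderiv I 𝓘(ℝ, ℝ) (fun x => EuclideanSpace.proj (𝕜 := ℝ) i (e x)) b =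
          (EuclideanSpace.proj (𝕜 := ℝ) i : EuclideanSpace ℝ (Fin n) →L[ℝ] ℝ).comp
            (mfderiv I (𝓡 n) e b) := by
        rw [show (fun x => EuclideanSpace.proj (𝕜 := ℝ) i (e x)) =
            (EuclideanSpace.proj (𝕜 := ℝ) i) ∘ e from rfl,
          mfderiv_comp b ((EuclideanSpace.proj (𝕜 := ℝ) i).mdifferentiableAt)
            ((he b).mdifferentiableAt (by simp)),
          ContinuousLinearMap.mfderiv_eq]
        rfl
      have := h _ hf
      rw [hcomp] at this
      exact this
    exact PiLp.ext this
  have : mfderiv I (𝓡 n) e b v = mfderiv I (𝓡 n) e b 0 := by rw [key, map_zero]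
  exact hinj b this
end Sep

section Statement

variable {EM : Type*} [NormedAddCommGroup EM] [NormedSpace ℝ EM]
  {HM : Type*} [TopologicalSpace HM] {IM : ModelWithCorners ℝ EM HM}
  {M : Type*} [TopologicalSpace M] [ChartedSpace HM M] [IsManifold IM (⊤ : ℕ∞) M]
  {EB : Type*} [NormedAddCommGroup EB] [NormedSpace ℝ EB]
  {HB : Type*} [TopologicalSpace HB] {IB : ModelWithCorners ℝ EB HB}
  {B : Type*} [TopologicalSpace B] [ChartedSpace HB B] [IsManifold IB (⊤ : ℕ∞) B]
  [IM.Boundaryless] [IB.Boundaryless] [CompactSpace M] [CompactSpace B]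
  [T2Space M] [T2Space B] [FiniteDimensional ℝ EM] [FiniteDimensional ℝ EB]


theorem aux_bracket_vertical
    (π : M → B) (hπs : ContMDiff IM IB (⊤ : ℕ∞) π)
    (lieM : LieBracketData IM M)
    (X : ∀ m : M, TangentSpace IM m) (hXs : IsSmoothVF IM X) (hXv : IsVerticalVF IM IB π X)
    (Y : ∀ b : B, TangentSpace IB b) (hYs : IsSmoothVF IB Y)
    (YH : ∀ m : M, TangentSpace IM m) (hYHs : IsSmoothVF IM YH)
    (hYHl : ∀ m : M, mfderiv IM IB π m (YH m) = Y (π m)) :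
    IsVerticalVF IM IB π (lieM.bracket X YH) := by
  intro m
  apply aux_tangent_sep (I := IB)
  intro f hf
  have hπd : ∀ m' : M, MDifferentiableAt IM IB π m' :=
    fun m' => (hπs m').mdifferentiableAt (by simp)
  have hfd : ∀ b, MDifferentiableAt IB 𝓘(ℝ, ℝ) f b :=
    fun b => (hf b).mdifferentiableAt (by simp)
  have hfπ : ContMDiff IM 𝓘(ℝ, ℝ) (⊤ : ℕ∞) (fun m' => f (π m')) := hf.comp hπs
  have chain : ∀ (V : ∀ m : M, TangentSpace IM m) (m' : M),
      vfApply IM V (fun m'' => f (π m'')) m' =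
        mfderiv IB 𝓘(ℝ, ℝ) f (π m') (mfderiv IM IB π m' (V m')) := by
    intro V m'
    show mfderiv IM 𝓘(ℝ, ℝ) (f ∘ π) m' (V m') = _
    rw [mfderiv_comp m' (hfd (π m')) (hπd m')]
    rfl
  have hXzero : vfApply IM X (fun m'' => f (π m'')) = fun _ => (0 : ℝ) := by
    funext m'
    rw [chain X m', hXv m', map_zero]
    rfl
  have hYHf : vfApply IM YH (fun m'' => f (π m'')) = fun m' => vfApply IB Y f (π m') := by
    funext m'
    rw [chain YH m', hYHl m']
    rfl
  have happ := lieM.apply_eq X YH hXs hYHs (fun m'' => f (π m'')) hfπ m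
  rw [hXzero, hYHf] at happ
  have h2 : vfApply IM YH (fun _ => (0 : ℝ)) m = 0 := by
    show mfderiv IM 𝓘(ℝ, ℝ) (fun _ => (0 : ℝ)) m (YH m) = 0
    rw [mfderiv_const]
    rfl
  have hh : ContMDiff IB 𝓘(ℝ, ℝ) (⊤ : ℕ∞) (vfApply IB Y f) := aux_vfApply_smooth Y hYs hf
  have h1 : vfApply IM X (fun m' => vfApply IB Y f (π m')) m = 0 := by
    show mfderiv IM 𝓘(ℝ, ℝ) ((vfApply IB Y f) ∘ π) m (X m) = 0
    rw [mfderiv_comp m ((hh (π m)).mdifferentiableAt (by simp)) (hπd m)]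
    show mfderiv IB 𝓘(ℝ, ℝ) (vfApply IB Y f) (π m) (mfderiv IM IB π m (X m)) = 0
    rw [hXv m, map_zero]
  rw [h1, h2] at happ
  have := (chain (lieM.bracket X YH) m).symm.trans happ
  exact this.trans (sub_zero (0 : ℝ))


/-- Let `X` be a smooth vertical vector field on `M` and let `Y_H` and `Z_H` be the
horizontal lifts of smooth vector fields `Y` and `Z` on `B`. Then
`2·⟪∇^M_X Y_H, Z_H⟫ = −⟪[Y_H, Z_H], X⟫` as functions on `M`. -/
theorem two_inner_levi_civita_vertical_horizontal_lifts
    (gM : RiemannianMetric IM M) (gB : RiemannianMetric IB B)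
    (π : M → B) (hπ : IsRiemannianSubmersion IM IB π gM gB)
    (lieM : LieBracketData IM M) (lieB : LieBracketData IB B)
    (covM : LeviCivita gM lieM) (covB : LeviCivita gB lieB)
    (X : ∀ m : M, TangentSpace IM m) (hXsmooth : IsSmoothVF IM X)
    (hXvert : IsVerticalVF IM IB π X)
    (Y : ∀ b : B, TangentSpace IB b) (hYsmooth : IsSmoothVF IB Y)
    (Z : ∀ b : B, TangentSpace IB b) (hZsmooth : IsSmoothVF IB Z)
    (YH : ∀ m : M, TangentSpace IM m) (hYH : IsHorizontalLift IM IB π gM Y YH)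
    (ZH : ∀ m : M, TangentSpace IM m) (hZH : IsHorizontalLift IM IB π gM Z ZH) :
    ∀ m : M, 2 * gM.g m (covM.cov X YH m) (ZH m) =
      -gM.g m (lieM.bracket YH ZH m) (X m) := by
  intro m
  have hYHs := hYH.1; have hYHh := hYH.2.1; have hYHl := hYH.2.2
  have hZHs := hZH.1; have hZHh := hZH.2.1; have hZHl := hZH.2.2
  -- g-algebra helpers
  have gsub : ∀ u w z : TangentSpace IM m, gM.g m (u - w) z = gM.g m u z - gM.g m w z := by
    intro u w z
    rw [sub_eq_add_neg, ← neg_one_smul ℝ w, gM.add_left, gM.smul_left]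
    ring
  -- (A) X ⟪YH, ZH⟫ = 0
  have hfunYZ : (fun m' => gM.g m' (YH m') (ZH m')) =
      fun m' => gB.g (π m') (Y (π m')) (Z (π m')) := by
    funext m'
    rw [← hπ.isometry m' (YH m') (ZH m') (fun u hu => hYHh m' u hu)
        (fun u hu => hZHh m' u hu), hYHl m', hZHl m']
  have hA0 : vfApply IM X (fun m' => gM.g m' (YH m') (ZH m')) m = 0 := by
    rw [hfunYZ]
    show mfderiv IM 𝓘(ℝ, ℝ) ((fun b => gB.g b (Y b) (Z b)) ∘ π) m (X m) = 0
    rw [mfderiv_comp m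
        ((gB.smooth Y Z hYsmooth hZsmooth (π m)).mdifferentiableAt (by simp))
        ((hπ.smooth m).mdifferentiableAt (by simp))]
    show mfderiv IB 𝓘(ℝ, ℝ) (fun b => gB.g b (Y b) (Z b)) (π m)
      (mfderiv IM IB π m (X m)) = 0
    rw [hXvert m, map_zero]
  rw [covM.metric X YH ZH hXsmooth hYHs hZHs m] at hA0
  -- derivative of the zero function
  have hzero : ∀ V : ∀ m' : M, TangentSpace IM m', vfApply IM V (fun _ => (0 : ℝ)) m = 0 := by
    intro V
    show mfderiv IM 𝓘(ℝ, ℝ) (fun _ => (0 : ℝ)) m (V m) = 0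
    rw [mfderiv_const]
    rfl
  -- (B) YH ⟪X, ZH⟫ = 0
  have hBfun : (fun m' => gM.g m' (X m') (ZH m')) = fun _ => (0 : ℝ) := by
    funext m'
    rw [gM.symm]
    exact hZHh m' (X m') (hXvert m')
  have hB := covM.metric YH X ZH hYHs hXsmooth hZHs m
  rw [hBfun, hzero YH] at hB
  -- (C) ZH ⟪X, YH⟫ = 0
  have hCfun : (fun m' => gM.g m' (X m') (YH m')) = fun _ => (0 : ℝ) := by
    funext m'
    rw [gM.symm]
    exact hYHh m' (X m') (hXvert m')
  have hC := covM.metric ZH X YH hZHs hXsmooth hYHs m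
  rw [hCfun, hzero ZH] at hC
  -- torsion-free identities
  have hT1 := covM.torsion_free X YH hXsmooth hYHs m
  have hT2 := covM.torsion_free X ZH hXsmooth hZHs m
  have hT3 := covM.torsion_free YH ZH hYHs hZHs m
  -- vertical brackets
  have hV1 := aux_bracket_vertical π hπ.smooth lieM X hXsmooth hXvert Y hYsmooth YH hYHs hYHl
  have hV2 := aux_bracket_vertical π hπ.smooth lieM X hXsmooth hXvert Z hZsmooth ZH hZHs hZHl
  have hB1 : gM.g m (lieM.bracket X YH m) (ZH m) = 0 := by
    rw [gM.symm]
    exact hZHh m _ (hV1 m)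
  have hB2 : gM.g m (lieM.bracket X ZH m) (YH m) = 0 := by
    rw [gM.symm]
    exact hYHh m _ (hV2 m)
  have e1 : gM.g m (covM.cov X YH m) (ZH m) - gM.g m (covM.cov YH X m) (ZH m) = 0 := by
    rw [← gsub, hT1, hB1]
  have e2 : gM.g m (covM.cov X ZH m) (YH m) - gM.g m (covM.cov ZH X m) (YH m) = 0 := by
    rw [← gsub, hT2, hB2]
  have e3 : gM.g m (covM.cov YH ZH m) (X m) - gM.g m (covM.cov ZH YH m) (X m) =
      gM.g m (lieM.bracket YH ZH m) (X m) := by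
    rw [← gsub, hT3]
  have hs1 : gM.g m (YH m) (covM.cov X ZH m) = gM.g m (covM.cov X ZH m) (YH m) :=
    gM.symm m _ _
  have hs2 : gM.g m (X m) (covM.cov YH ZH m) = gM.g m (covM.cov YH ZH m) (X m) :=
    gM.symm m _ _
  have hs3 : gM.g m (X m) (covM.cov ZH YH m) = gM.g m (covM.cov ZH YH m) (X m) :=
    gM.symm m _ _
  linarith [hA0, hB, hC, e1, e2, e3, hs1, hs2, hs3]


end Statement
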